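/- The sample mean ȳ satisfies P( |ȳ − (μ₁+μ₂)/2| < Δ/4 ) ≥ 1 − 4·exp(−N₁/(72b²)) − 2·exp(−N₁Δ²/(288σ²)). -/

import Mathlib

open MeasureTheory ProbabilityTheory Real
open scoped NNReal ENNReal

section Aux

open Finset

variable {Ω : Type} [MeasurableSpace Ω] {P : Measure Ω}

/-- real gaussian integral with linear term -/
lemma aux_integral_exp_quad {a : ℝ} (ha : 0 < a) (t : ℝ) :
    ∫ x : ℝ, exp (-a * x ^ 2 + t * x) = Real.sqrt (π / a) * exp (t ^ 2 / (4 * a)) := by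
  have ha' : a ≠ 0 := ha.ne'
  have hc : ∀ x : ℝ, -a * x ^ 2 + t * x
      = t ^ 2 / (4 * a) + (-a * (x + -(t / (2 * a))) ^ 2) := by
    intro x; field_simp; ring
  simp_rw [hc, Real.exp_add, integral_const_mul]
  rw [integral_add_right_eq_self (fun y : ℝ => rexp (-a * y ^ 2)) (-(t / (2 * a)))]
  rw [integral_gaussian]
  ring

lemma aux_integrable_exp_quad {a : ℝ} (ha : 0 < a) (t : ℝ) :
    Integrable (fun x : ℝ => exp (-a * x ^ 2 + t * x)) := by
  have ha' : a ≠ 0 := ha.ne'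
  have hc : (fun x : ℝ => exp (-a * x ^ 2 + t * x))
      = fun x : ℝ => rexp (t ^ 2 / (4 * a)) * rexp (-a * (x - t / (2 * a)) ^ 2) := by
    funext x
    rw [← Real.exp_add]
    congr 1
    field_simp; ring
  rw [hc]
  exact ((integrable_exp_neg_mul_sq ha).comp_sub_right (t / (2 * a))).const_mul _

lemma aux_integral_exp_gaussian {v : ℝ} (hv : 0 < v) (t : ℝ) :
    ∫ x, exp (t * x) ∂(gaussianReal 0 (Real.toNNReal v)) = exp (v * t ^ 2 / 2) := by
  have hv' : Real.toNNReal v ≠ 0 := by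
    simp only [ne_eq, Real.toNNReal_eq_zero, not_le]; exact hv
  have hvc : ((Real.toNNReal v : ℝ≥0) : ℝ) = v := Real.coe_toNNReal v hv.le
  rw [gaussianReal_of_var_ne_zero _ hv']
  have hpdf : gaussianPDF 0 (Real.toNNReal v)
      = fun x => ((Real.toNNReal (gaussianPDFReal 0 (Real.toNNReal v) x) : ℝ≥0) : ℝ≥0∞) := rfl
  rw [hpdf, integral_withDensity_eq_integral_smul
    ((measurable_gaussianPDFReal 0 _).real_toNNReal)]
  have hid : ∀ x : ℝ, (Real.toNNReal (gaussianPDFReal 0 (Real.toNNReal v) x)) • rexp (t * x)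
      = (Real.sqrt (2 * π * v))⁻¹ * rexp (-(1 / (2 * v)) * x ^ 2 + t * x) := by
    intro x
    simp only [NNReal.smul_def, smul_eq_mul, Real.coe_toNNReal _ (gaussianPDFReal_nonneg _ _ _)]
    unfold gaussianPDFReal
    rw [hvc, mul_assoc ((Real.sqrt (2 * π * v))⁻¹), ← Real.exp_add]
    congr 1
    field_simp
    congr 1; ring
  simp_rw [hid]
  rw [integral_const_mul, aux_integral_exp_quad (by positivity) t]
  have h1 : Real.sqrt (π / (1 / (2 * v))) = Real.sqrt (2 * π * v) := by
    congr 1; field_simp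
  have h2 : t ^ 2 / (4 * (1 / (2 * v))) = v * t ^ 2 / 2 := by field_simp; ring
  rw [h1, h2, ← mul_assoc, inv_mul_cancel₀ (by positivity), one_mul]

lemma aux_integrable_exp_gaussian {v : ℝ} (hv : 0 < v) (t : ℝ) :
    Integrable (fun x => exp (t * x)) (gaussianReal 0 (Real.toNNReal v)) := by
  have hv' : Real.toNNReal v ≠ 0 := by
    simp only [ne_eq, Real.toNNReal_eq_zero, not_le]; exact hv
  have hvc : ((Real.toNNReal v : ℝ≥0) : ℝ) = v := Real.coe_toNNReal v hv.le
  rw [gaussianReal_of_var_ne_zero _ hv']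
  have hpdf : gaussianPDF 0 (Real.toNNReal v)
      = fun x => ((Real.toNNReal (gaussianPDFReal 0 (Real.toNNReal v) x) : ℝ≥0) : ℝ≥0∞) := rfl
  rw [hpdf, integrable_withDensity_iff_integrable_smul
    ((measurable_gaussianPDFReal 0 _).real_toNNReal)]
  have hid : ∀ x : ℝ, (Real.toNNReal (gaussianPDFReal 0 (Real.toNNReal v) x)) • rexp (t * x)
      = (Real.sqrt (2 * π * v))⁻¹ * rexp (-(1 / (2 * v)) * x ^ 2 + t * x) := by
    intro x
    simp only [NNReal.smul_def, smul_eq_mul, Real.coe_toNNReal _ (gaussianPDFReal_nonneg _ _ _)]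
    unfold gaussianPDFReal
    rw [hvc, mul_assoc ((Real.sqrt (2 * π * v))⁻¹), ← Real.exp_add]
    congr 1
    field_simp
    congr 1; ring
  simp_rw [hid]
  exact (aux_integrable_exp_quad (by positivity) t).const_mul _

lemma aux_integrable_dirac {f : ℝ → ℝ} (hf : StronglyMeasurable f) (a : ℝ) :
    Integrable f (Measure.dirac a) := by
  refine ⟨hf.aestronglyMeasurable, ?_⟩
  rw [HasFiniteIntegral, lintegral_dirac' a hf.measurable.enorm]
  exact enorm_lt_top

lemma aux_integrable_bern {f : ℝ → ℝ} (hf : StronglyMeasurable f) :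
    Integrable f ((1/2 : ENNReal) • Measure.dirac (1 : ℝ)
      + (1/2 : ENNReal) • Measure.dirac (0 : ℝ)) := by
  rw [integrable_add_measure]
  constructor <;>
    exact (aux_integrable_dirac hf _).smul_measure (by norm_num)

lemma aux_integral_bern {f : ℝ → ℝ} (hf : StronglyMeasurable f) :
    ∫ x, f x ∂((1/2 : ENNReal) • Measure.dirac (1 : ℝ)
      + (1/2 : ENNReal) • Measure.dirac (0 : ℝ)) = (f 1 + f 0) / 2 := by
  rw [integral_add_measure ((aux_integrable_dirac hf _).smul_measure (by norm_num))
      ((aux_integrable_dirac hf _).smul_measure (by norm_num)),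
    integral_smul_measure, integral_smul_measure, integral_dirac' _ _ hf,
    integral_dirac' _ _ hf]
  simp only [smul_eq_mul]
  norm_num
  ring

lemma aux_iIndepFun_ae_congr {ι : Type*} [Countable ι]
    {f g : ι → Ω → ℝ} (hfg : ∀ i, f i =ᵐ[P] g i)
    (h : iIndepFun f P) :
    iIndepFun g P := by
  rw [iIndepFun_iff_measure_inter_preimage_eq_mul] at h ⊢
  intro S sets hsets
  have hae : ∀ᵐ ω ∂P, ∀ i, f i ω = g i ω := MeasureTheory.ae_all_iff.2 hfg
  have h1 : ∀ i : ι, P (f i ⁻¹' sets i) = P (g i ⁻¹' sets i) := fun i =>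
    measure_congr (Filter.eventuallyEq_set.2 ((hfg i).mono fun ω hω => by
      simp only [Set.mem_preimage, hω]))
  have h2 : P (⋂ i ∈ S, f i ⁻¹' sets i) = P (⋂ i ∈ S, g i ⁻¹' sets i) :=
    measure_congr (Filter.eventuallyEq_set.2 (hae.mono fun ω hω => by
      simp only [Set.mem_iInter, Set.mem_preimage, hω]))
  rw [← h2, h S hsets]
  exact Finset.prod_congr rfl fun i _ => h1 i

/-- two-sided Chernoff bound given a uniform sub-Gaussian mgf bound -/
lemma aux_chernoff_abs [IsProbabilityMeasure P] {ι : Type*}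
    {X : ι → Ω → ℝ} (hm : ∀ i, Measurable (X i))
    (hindep : iIndepFun X P)
    (s : Finset ι) {K : ℝ} (hK : 0 < K)
    (hmgf : ∀ i ∈ s, ∀ t : ℝ, mgf (X i) P t ≤ exp (K * t ^ 2))
    (hint : ∀ i ∈ s, ∀ t : ℝ, Integrable (fun ω => exp (t * X i ω)) P)
    {a : ℝ} (ha : 0 < a) :
    (P {ω | a ≤ |∑ i ∈ s, X i ω|}).toReal
      ≤ 2 * exp (-a ^ 2 / (4 * s.card * K)) := by
  classical
  rcases s.eq_empty_or_nonempty with rfl | hs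
  · have he : {ω : Ω | a ≤ |∑ i ∈ (∅ : Finset ι), X i ω|} = ∅ := by
      ext ω; simp [not_le, ha]
    rw [he]
    simp only [measure_empty, ENNReal.toReal_zero]
    positivity
  · have hcard : 0 < ((s.card : ℝ)) := by exact_mod_cast hs.card_pos
    set n : ℝ := (s.card : ℝ) with hn
    set t : ℝ := a / (2 * n * K) with htdef
    have ht : 0 < t := by positivity
    have hintS : ∀ u : ℝ, Integrable (fun ω => exp (u * (∑ i ∈ s, X i) ω)) P := fun u =>
      hindep.integrable_exp_mul_sum hm (fun i hi => hint i hi u)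
    have hmgfS : ∀ u : ℝ, mgf (∑ i ∈ s, X i) P u ≤ exp (n * (K * u ^ 2)) := by
      intro u
      rw [hindep.mgf_sum hm]
      calc ∏ i ∈ s, mgf (X i) P u ≤ ∏ _i ∈ s, exp (K * u ^ 2) :=
            Finset.prod_le_prod (fun i _ => mgf_nonneg) (fun i hi => hmgf i hi u)
        _ = exp (n * (K * u ^ 2)) := by
            rw [Finset.prod_const, ← Real.exp_nat_mul, hn]
    have hkey : -t * a + n * (K * t ^ 2) = -a ^ 2 / (4 * n * K) := by
      rw [htdef]; field_simp; ring
    have hup : (P {ω | a ≤ (∑ i ∈ s, X i) ω}).toReal ≤ exp (-a ^ 2 / (4 * n * K)) := by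
      calc (P {ω | a ≤ (∑ i ∈ s, X i) ω}).toReal
          ≤ exp (-t * a) * mgf (∑ i ∈ s, X i) P t :=
            measure_ge_le_exp_mul_mgf a ht.le (hintS t)
        _ ≤ exp (-t * a) * exp (n * (K * t ^ 2)) :=
            mul_le_mul_of_nonneg_left (hmgfS t) (exp_pos _).le
        _ = exp (-a ^ 2 / (4 * n * K)) := by rw [← Real.exp_add, hkey]
    have hlow : (P {ω | (∑ i ∈ s, X i) ω ≤ -a}).toReal ≤ exp (-a ^ 2 / (4 * n * K)) := by
      calc (P {ω | (∑ i ∈ s, X i) ω ≤ -a}).toReal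
          ≤ exp (-(-t) * (-a)) * mgf (∑ i ∈ s, X i) P (-t) :=
            measure_le_le_exp_mul_mgf (-a) (neg_nonpos.mpr ht.le) (hintS (-t))
        _ ≤ exp (-(-t) * (-a)) * exp (n * (K * (-t) ^ 2)) :=
            mul_le_mul_of_nonneg_left (hmgfS (-t)) (exp_pos _).le
        _ = exp (-a ^ 2 / (4 * n * K)) := by
            rw [← Real.exp_add, ← hkey]; ring_nf
    have hsub : {ω : Ω | a ≤ |∑ i ∈ s, X i ω|}
        ⊆ {ω | a ≤ (∑ i ∈ s, X i) ω} ∪ {ω | (∑ i ∈ s, X i) ω ≤ -a} := by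
      intro ω hω
      simp only [Set.mem_setOf_eq] at hω
      simp only [Set.mem_union, Set.mem_setOf_eq, Finset.sum_apply]
      rcases le_abs.mp hω with h | h
      · exact Or.inl h
      · exact Or.inr (by linarith)
    calc (P {ω | a ≤ |∑ i ∈ s, X i ω|}).toReal
        ≤ (P ({ω | a ≤ (∑ i ∈ s, X i) ω} ∪ {ω | (∑ i ∈ s, X i) ω ≤ -a})).toReal :=
          ENNReal.toReal_mono (measure_ne_top _ _) (measure_mono hsub)
      _ ≤ (P {ω | a ≤ (∑ i ∈ s, X i) ω} + P {ω | (∑ i ∈ s, X i) ω ≤ -a}).toReal :=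
          ENNReal.toReal_mono
            (ENNReal.add_ne_top.2 ⟨measure_ne_top _ _, measure_ne_top _ _⟩)
            (measure_union_le _ _)
      _ = (P {ω | a ≤ (∑ i ∈ s, X i) ω}).toReal
            + (P {ω | (∑ i ∈ s, X i) ω ≤ -a}).toReal :=
          ENNReal.toReal_add (measure_ne_top _ _) (measure_ne_top _ _)
      _ ≤ 2 * exp (-a ^ 2 / (4 * s.card * K)) := by
          rw [← hn]; linarith [hup, hlow]

end Aux

/-- For `y_i = μ₁(1−z_i) + μ₂ z_i + w_i` with `z_i` i.i.d. Bernoulli(1/2),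
`w_i` i.i.d. `N(0,σ²)` (all mutually independent), and `μ₁, μ₂ ∈ 𝔻 = {kΔ : |k| ≤ b}`, the
sample mean `ȳ` satisfies
`P(|ȳ − (μ₁+μ₂)/2| < Δ/4) ≥ 1 − 4exp(−N₁/(72b²)) − 2exp(−N₁Δ²/(288σ²))`. -/
theorem sample_mean_concentration
    {Ω : Type} [MeasurableSpace Ω] (P : Measure Ω) [IsProbabilityMeasure P]
    (Δ σ : ℝ) (b N₁ : ℕ) (μ₁ μ₂ : ℝ) (z w : Fin N₁ → Ω → ℝ)
    (hΔ : 0 < Δ) (hσ : 0 < σ) (hb : 0 < b) (hN : 0 < N₁)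
    (hμ₁ : ∃ k : ℤ, |k| ≤ (b : ℤ) ∧ μ₁ = (k : ℝ) * Δ)
    (hμ₂ : ∃ k : ℤ, |k| ≤ (b : ℤ) ∧ μ₂ = (k : ℝ) * Δ)
    (hindep : iIndepFun (Sum.elim z w) P)
    (hz : ∀ i, Measure.map (z i) P =
      (1/2 : ENNReal) • Measure.dirac (1 : ℝ) + (1/2 : ENNReal) • Measure.dirac (0 : ℝ))
    (hw : ∀ i, Measure.map (w i) P = gaussianReal 0 (Real.toNNReal (σ ^ 2))) :
    P {ω | |(1 / (N₁ : ℝ)) * ∑ i, (μ₁ * (1 - z i ω) + μ₂ * z i ω + w i ω)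
            - (μ₁ + μ₂) / 2| < Δ / 4}
      ≥ ENNReal.ofReal (1 - 4 * Real.exp (-(N₁ : ℝ) / (72 * (b : ℝ) ^ 2))
          - 2 * Real.exp (-(N₁ : ℝ) * Δ ^ 2 / (288 * σ ^ 2))) := by
  obtain ⟨k₁, hk₁b, hk₁⟩ := hμ₁
  obtain ⟨k₂, hk₂b, hk₂⟩ := hμ₂
  have hNpos : (0:ℝ) < N₁ := by exact_mod_cast hN
  have hbpos : (0:ℝ) < b := by exact_mod_cast hb
  have hσ2 : (0:ℝ) < σ ^ 2 := by positivity
  -- a.e. measurable versions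
  have hzae : ∀ i, AEMeasurable (z i) P := by
    intro i
    by_contra h
    have h0 := hz i
    rw [Measure.map_of_not_aemeasurable h] at h0
    have h1 := congrArg (fun m : Measure ℝ => m Set.univ) h0
    simp only [Measure.coe_zero, Pi.zero_apply, Measure.add_apply, Measure.smul_apply, measure_univ, smul_eq_mul, mul_one, ENNReal.inv_two_add_inv_two, one_div] at h1
    simp [ENNReal.inv_two_add_inv_two] at h1
  have hwae : ∀ i, AEMeasurable (w i) P := by
    intro i
    by_contra h
    have h0 := hw i
    rw [Measure.map_of_not_aemeasurable h] at h0
    have h1 := congrArg (fun m : Measure ℝ => m Set.univ) h0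
    simp at h1
  set z' : Fin N₁ → Ω → ℝ := fun i => (hzae i).mk (z i) with hz'def
  set w' : Fin N₁ → Ω → ℝ := fun i => (hwae i).mk (w i) with hw'def
  have hz'm : ∀ i, Measurable (z' i) := fun i => (hzae i).measurable_mk
  have hw'm : ∀ i, Measurable (w' i) := fun i => (hwae i).measurable_mk
  have hz'e : ∀ i, z i =ᵐ[P] z' i := fun i => (hzae i).ae_eq_mk
  have hw'e : ∀ i, w i =ᵐ[P] w' i := fun i => (hwae i).ae_eq_mk
  have hz' : ∀ i, Measure.map (z' i) P =
      (1/2 : ENNReal) • Measure.dirac (1 : ℝ) + (1/2 : ENNReal) • Measure.dirac (0 : ℝ) := by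
    intro i
    rw [← Measure.map_congr (hz'e i)]
    exact hz i
  have hw' : ∀ i, Measure.map (w' i) P = gaussianReal 0 (Real.toNNReal (σ ^ 2)) := by
    intro i
    rw [← Measure.map_congr (hw'e i)]
    exact hw i
  have hindep' : iIndepFun (Sum.elim z' w') P := by
    refine aux_iIndepFun_ae_congr (fun i => ?_) hindep
    cases i with
    | inl j => exact hz'e j
    | inr j => exact hw'e j
  -- the independent family of centered variables
  set Y : Fin N₁ ⊕ Fin N₁ → Ω → ℝ := Sum.elim (fun j ω => z' j ω - 1/2) w' with hYdef
  have hYm : ∀ i, Measurable (Y i) := by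
    intro i
    cases i with
    | inl j => exact (hz'm j).sub measurable_const
    | inr j => exact hw'm j
  have hYindep : iIndepFun Y P := by
    have h2 := hindep'.comp
      (Sum.elim (fun _ : Fin N₁ => fun x : ℝ => x - 1/2) (fun _ : Fin N₁ => (id : ℝ → ℝ)))
      (by
        intro i
        cases i with
        | inl j => exact measurable_id.sub measurable_const
        | inr j => exact measurable_id)
    have heq : (fun i => Sum.elim (fun _ : Fin N₁ => fun x : ℝ => x - 1/2)
        (fun _ : Fin N₁ => (id : ℝ → ℝ)) i ∘ Sum.elim z' w' i) = Y := by
      funext i; cases i <;> rfl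
    rwa [heq] at h2
  set eL : Fin N₁ ↪ Fin N₁ ⊕ Fin N₁ := ⟨Sum.inl, Sum.inl_injective⟩ with heL
  set eR : Fin N₁ ↪ Fin N₁ ⊕ Fin N₁ := ⟨Sum.inr, Sum.inr_injective⟩ with heR
  set sL : Finset (Fin N₁ ⊕ Fin N₁) := Finset.univ.map eL with hsL
  set sR : Finset (Fin N₁ ⊕ Fin N₁) := Finset.univ.map eR with hsR
  have hcardL : sL.card = N₁ := by simp [hsL]
  have hcardR : sR.card = N₁ := by simp [hsR]
  set aZ : ℝ := N₁ / (12 * b) with haZ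
  set aW : ℝ := N₁ * Δ / 12 with haW
  -- mgf and integrability for the Bernoulli part
  have hgZ : ∀ t : ℝ, StronglyMeasurable (fun x : ℝ => exp (t * (x - 1/2))) := fun t =>
    (Real.continuous_exp.comp
      (continuous_const.mul (continuous_id.sub continuous_const))).stronglyMeasurable
  have hmgfZ : ∀ i ∈ sL, ∀ t : ℝ, mgf (Y i) P t ≤ exp ((1/8 : ℝ) * t ^ 2) := by
    intro i hi t
    obtain ⟨j, -, rfl⟩ := Finset.mem_map.mp hi
    have hmap : ∫ ω, exp (t * (z' j ω - 1/2)) ∂P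
        = ∫ x, exp (t * (x - 1/2)) ∂(Measure.map (z' j) P) :=
      (integral_map (hz'm j).aemeasurable (hgZ t).aestronglyMeasurable).symm
    have hval : mgf (Y (eL j)) P t = (exp (t * (1 - 1/2)) + exp (t * (0 - 1/2))) / 2 := by
      show (∫ ω, exp (t * (z' j ω - 1/2)) ∂P) = _
      rw [hmap, hz' j, aux_integral_bern (hgZ t)]
    have h2 : t * (1 - 1/2) = t/2 := by ring
    have h3 : t * (0 - 1/2) = -(t/2) := by ring
    rw [hval, h2, h3, ← Real.cosh_eq]
    calc Real.cosh (t/2) ≤ exp ((t/2) ^ 2 / 2) := Real.cosh_le_exp_half_sq _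
      _ = exp ((1/8 : ℝ) * t ^ 2) := by congr 1; ring
  have hintZ : ∀ i ∈ sL, ∀ t : ℝ, Integrable (fun ω => exp (t * Y i ω)) P := by
    intro i hi t
    obtain ⟨j, -, rfl⟩ := Finset.mem_map.mp hi
    have h1 : Integrable (fun x : ℝ => exp (t * (x - 1/2))) (Measure.map (z' j) P) := by
      rw [hz' j]; exact aux_integrable_bern (hgZ t)
    exact (integrable_map_measure (hgZ t).aestronglyMeasurable
      (hz'm j).aemeasurable).mp h1
  -- mgf and integrability for the Gaussian part
  have hgW : ∀ t : ℝ, StronglyMeasurable (fun x : ℝ => exp (t * x)) := fun t =>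
    (Real.continuous_exp.comp (continuous_const.mul continuous_id)).stronglyMeasurable
  have hmgfW : ∀ i ∈ sR, ∀ t : ℝ, mgf (Y i) P t ≤ exp ((σ ^ 2 / 2) * t ^ 2) := by
    intro i hi t
    obtain ⟨j, -, rfl⟩ := Finset.mem_map.mp hi
    have hmap : ∫ ω, exp (t * w' j ω) ∂P
        = ∫ x, exp (t * x) ∂(Measure.map (w' j) P) :=
      (integral_map (hw'm j).aemeasurable (hgW t).aestronglyMeasurable).symm
    have hval : mgf (Y (eR j)) P t = exp (σ ^ 2 * t ^ 2 / 2) := by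
      show (∫ ω, exp (t * w' j ω) ∂P) = _
      rw [hmap, hw' j]
      exact aux_integral_exp_gaussian hσ2 t
    rw [hval]
    exact le_of_eq (by congr 1; ring)
  have hintW : ∀ i ∈ sR, ∀ t : ℝ, Integrable (fun ω => exp (t * Y i ω)) P := by
    intro i hi t
    obtain ⟨j, -, rfl⟩ := Finset.mem_map.mp hi
    have h1 : Integrable (fun x : ℝ => exp (t * x)) (Measure.map (w' j) P) := by
      rw [hw' j]; exact aux_integrable_exp_gaussian hσ2 t
    exact (integrable_map_measure (hgW t).aestronglyMeasurable
      (hw'm j).aemeasurable).mp h1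
  -- Chernoff bounds
  set A : Set Ω := {ω | aZ ≤ |∑ j, (z' j ω - 1/2)|} with hA
  set B : Set Ω := {ω | aW ≤ |∑ j, w' j ω|} with hB
  have hPA : (P A).toReal ≤ 2 * exp (-(N₁ : ℝ) / (72 * (b : ℝ) ^ 2)) := by
    have h := aux_chernoff_abs hYm hYindep sL (K := (1/8 : ℝ)) (by norm_num) hmgfZ hintZ
      (a := aZ) (by positivity)
    have hset : {ω : Ω | aZ ≤ |∑ i ∈ sL, Y i ω|} = A := by
      ext ω
      simp [hA, hsL, Finset.sum_map, hYdef, heL]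
    have hexp : -aZ ^ 2 / (4 * (sL.card : ℝ) * (1/8 : ℝ)) = -(N₁ : ℝ) / (72 * (b : ℝ) ^ 2) := by
      rw [hcardL, haZ]
      field_simp
      ring
    rw [hset, hexp] at h
    exact h
  have hPB : (P B).toReal ≤ 2 * exp (-(N₁ : ℝ) * Δ ^ 2 / (288 * σ ^ 2)) := by
    have h := aux_chernoff_abs hYm hYindep sR (K := σ ^ 2 / 2) (by positivity) hmgfW hintW
      (a := aW) (by positivity)
    have hset : {ω : Ω | aW ≤ |∑ i ∈ sR, Y i ω|} = B := by
      ext ω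
      simp [hB, hsR, Finset.sum_map, hYdef, heR]
    have hexp : -aW ^ 2 / (4 * (sR.card : ℝ) * (σ ^ 2 / 2))
        = -(N₁ : ℝ) * Δ ^ 2 / (288 * σ ^ 2) := by
      rw [hcardR, haW]
      field_simp
      ring
    rw [hset, hexp] at h
    exact h
  -- bound on |μ₂ - μ₁|
  have hc : |μ₂ - μ₁| ≤ 2 * b * Δ := by
    rw [hk₁, hk₂, ← sub_mul, abs_mul, abs_of_pos hΔ]
    have hk : |(k₂ : ℝ) - k₁| ≤ 2 * b := by
      have h1 : |k₂ - k₁| ≤ 2 * (b : ℤ) := by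
        calc |k₂ - k₁| ≤ |k₂| + |k₁| := abs_sub _ _
          _ ≤ 2 * (b : ℤ) := by omega
      calc |(k₂ : ℝ) - k₁| = ((|k₂ - k₁| : ℤ) : ℝ) := by rw [Int.cast_abs]; push_cast; ring_nf
        _ ≤ ((2 * (b : ℤ) : ℤ) : ℝ) := by exact_mod_cast h1
        _ = 2 * b := by push_cast; ring
    calc |(k₂ : ℝ) - k₁| * Δ ≤ (2 * b) * Δ := mul_le_mul_of_nonneg_right hk hΔ.le
      _ = 2 * b * Δ := by ring
  -- the good event covers the complement of A ∪ B
  set E : Set Ω := {ω | |(1 / (N₁ : ℝ)) * ∑ i, (μ₁ * (1 - z i ω) + μ₂ * z i ω + w i ω)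
      - (μ₁ + μ₂) / 2| < Δ / 4} with hE
  have hcover : ∀ᵐ ω ∂P, ω ∈ E ∪ (A ∪ B) := by
    have hae : ∀ᵐ ω ∂P, (∀ j, z j ω = z' j ω) ∧ (∀ j, w j ω = w' j ω) :=
      (MeasureTheory.ae_all_iff.2 hz'e).and (MeasureTheory.ae_all_iff.2 hw'e)
    filter_upwards [hae] with ω hω
    obtain ⟨hzz, hww⟩ := hω
    by_cases hmA : ω ∈ A
    · exact Or.inr (Or.inl hmA)
    by_cases hmB : ω ∈ B
    · exact Or.inr (Or.inr hmB)
    left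
    rw [hA, Set.mem_setOf_eq, not_le] at hmA
    rw [hB, Set.mem_setOf_eq, not_le] at hmB
    rw [hE, Set.mem_setOf_eq]
    have hsum : ∑ i, (μ₁ * (1 - z i ω) + μ₂ * z i ω + w i ω)
        = (N₁ : ℝ) * ((μ₁ + μ₂) / 2) + (μ₂ - μ₁) * (∑ j, (z' j ω - 1/2)) + ∑ j, w' j ω := by
      calc ∑ i, (μ₁ * (1 - z i ω) + μ₂ * z i ω + w i ω)
          = ∑ i, ((μ₁ + μ₂) / 2 + (μ₂ - μ₁) * (z' i ω - 1/2) + w' i ω) :=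
            Finset.sum_congr rfl (fun i _ => by rw [hzz i, hww i]; ring)
        _ = _ := by
            rw [Finset.sum_add_distrib, Finset.sum_add_distrib, Finset.sum_const,
              ← Finset.mul_sum, Finset.card_univ, Fintype.card_fin, nsmul_eq_mul]
    have hexpr : (1 / (N₁ : ℝ)) * ∑ i, (μ₁ * (1 - z i ω) + μ₂ * z i ω + w i ω)
        - (μ₁ + μ₂) / 2
        = ((μ₂ - μ₁) * (∑ j, (z' j ω - 1/2)) + ∑ j, w' j ω) / N₁ := by
      rw [hsum]
      field_simp
      ring
    rw [hexpr, abs_div, abs_of_pos hNpos, div_lt_iff₀ hNpos]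
    have h1 : |μ₂ - μ₁| * |∑ j, (z' j ω - 1/2)| ≤ 2 * b * Δ * |∑ j, (z' j ω - 1/2)| :=
      mul_le_mul_of_nonneg_right hc (abs_nonneg _)
    have h2 : 2 * (b:ℝ) * Δ * |∑ j, (z' j ω - 1/2)| < 2 * b * Δ * aZ :=
      mul_lt_mul_of_pos_left hmA (by positivity)
    have h3 : 2 * (b:ℝ) * Δ * aZ = (N₁ : ℝ) * Δ / 6 := by
      rw [haZ]; field_simp; ring
    have h4 : aW = (N₁ : ℝ) * Δ / 12 := haW
    calc |(μ₂ - μ₁) * (∑ j, (z' j ω - 1/2)) + ∑ j, w' j ω|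
        ≤ |(μ₂ - μ₁) * (∑ j, (z' j ω - 1/2))| + |∑ j, w' j ω| := abs_add_le _ _
      _ = |μ₂ - μ₁| * |∑ j, (z' j ω - 1/2)| + |∑ j, w' j ω| := by rw [abs_mul]
      _ < Δ / 4 * N₁ := by
          rw [h4] at hmB
          linarith [h1, h2, h3, hmB]
  -- assembling the final probability bound
  have h0 : P ((E ∪ (A ∪ B))ᶜ) = 0 := by
    have := MeasureTheory.ae_iff.mp hcover
    simpa [Set.compl_def] using this
  have h1n : (1 : ℝ≥0∞) ≤ P E + (P A + P B) := by
    calc (1 : ℝ≥0∞) = P Set.univ := measure_univ.symm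
      _ = P ((E ∪ (A ∪ B)) ∪ (E ∪ (A ∪ B))ᶜ) := by rw [Set.union_compl_self]
      _ ≤ P (E ∪ (A ∪ B)) + P ((E ∪ (A ∪ B))ᶜ) := measure_union_le _ _
      _ = P (E ∪ (A ∪ B)) := by rw [h0, add_zero]
      _ ≤ P E + (P A + P B) :=
          le_trans (measure_union_le _ _) (add_le_add le_rfl (measure_union_le _ _))
  have hreal : 1 ≤ (P E).toReal + ((P A).toReal + (P B).toReal) := by
    have hne2 : P A + P B ≠ ⊤ :=
      ENNReal.add_ne_top.2 ⟨measure_ne_top _ _, measure_ne_top _ _⟩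
    have hne : P E + (P A + P B) ≠ ⊤ := ENNReal.add_ne_top.2 ⟨measure_ne_top _ _, hne2⟩
    have h5 := ENNReal.toReal_mono hne h1n
    rwa [ENNReal.toReal_one, ENNReal.toReal_add (measure_ne_top _ _) hne2,
      ENNReal.toReal_add (measure_ne_top _ _) (measure_ne_top _ _)] at h5
  rw [ge_iff_le]
  calc ENNReal.ofReal (1 - 4 * Real.exp (-(N₁ : ℝ) / (72 * (b : ℝ) ^ 2))
        - 2 * Real.exp (-(N₁ : ℝ) * Δ ^ 2 / (288 * σ ^ 2)))
      ≤ ENNReal.ofReal ((P E).toReal) := by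
        apply ENNReal.ofReal_le_ofReal
        have he1 := Real.exp_pos (-(N₁ : ℝ) / (72 * (b : ℝ) ^ 2))
        linarith [hPA, hPB, hreal]
    _ = P E := ENNReal.ofReal_toReal (measure_ne_top _ _)
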